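/- For every ε > 0, there exists a distinct minimal covering system S with R(S) = Σ 1/m_i < 1 + ε. -/

import Mathlib

/-- tail moduli coefficients: 2,3,4,6,12 -/
private def cf : ℕ → ℕ := fun j =>
  if j = 0 then 2 else if j = 1 then 3 else if j = 2 then 4 else if j = 3 then 6 else 12

/-- tail residues: 0,0,1,5,7 -/
private def rf : ℕ → ℤ := fun j =>
  if j = 0 then 0 else if j = 1 then 0 else if j = 2 then 1 else if j = 3 then 5 else 7

/-- witnesses for minimality of the tail congruences -/
private def wf : ℕ → ℤ := fun j =>
  if j = 0 then 2 else if j = 1 then 3 else if j = 2 then 1 else if j = 3 then 11 else 7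

private lemma chain_or_dvd (k : ℕ) (n : ℤ) :
    (∃ i < k, n ≡ 2^i [ZMOD (2^(i+1) : ℤ)]) ∨ (2^k : ℤ) ∣ n := by
  induction k with
  | zero => exact Or.inr ⟨n, by ring⟩
  | succ k ih =>
    rcases ih with ⟨i, hi, h⟩ | ⟨t, ht⟩
    · exact Or.inl ⟨i, Nat.lt_succ_of_lt hi, h⟩
    rcases Int.even_or_odd t with ⟨s, hs⟩ | ⟨s, hs⟩
    · exact Or.inr ⟨s, by rw [ht, hs]; ring⟩
    · refine Or.inl ⟨k, Nat.lt_succ_self k, ?_⟩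
      rw [Int.modEq_iff_dvd]
      exact ⟨-s, by rw [ht, hs]; ring⟩

private lemma tail_cover (t : ℤ) : ∃ j ≤ 4, t ≡ rf j [ZMOD (cf j : ℤ)] := by
  have h : t % 2 = 0 ∨ t % 3 = 0 ∨ t % 4 = 1 ∨ t % 6 = 5 ∨ t % 12 = 7 := by omega
  rcases h with h | h | h | h | h
  · exact ⟨0, by norm_num, by show t % 2 = 0 % 2; simpa using h⟩
  · exact ⟨1, by norm_num, by show t % 3 = 0 % 3; simpa using h⟩
  · exact ⟨2, by norm_num, by show t % 4 = 1 % 4; simpa using h⟩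
  · exact ⟨3, by norm_num, by show t % 6 = 5 % 6; simpa using h⟩
  · exact ⟨4, by norm_num, by show t % 12 = 7 % 12; simpa using h⟩

private lemma tail_not (a b : ℕ) (ha : a ≤ 4) (hb : b ≤ 4) (hab : a ≠ b) :
    ¬ (wf a ≡ rf b [ZMOD (cf b : ℤ)]) := by
  interval_cases a <;> interval_cases b <;> first
    | exact absurd rfl hab
    | decide

/-- cancel a positive factor in an Int.ModEq -/
private lemma cancel_modEq {c a b n : ℤ} (hc : 0 < c) (h : c * a ≡ c * b [ZMOD c * n]) :
    a ≡ b [ZMOD n] := by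
  rw [Int.modEq_iff_dvd] at h ⊢
  have h2 : c * n ∣ c * (b - a) := by rw [mul_sub]; exact h
  exact (mul_dvd_mul_iff_left hc.ne').mp h2

private lemma dvd_of_tail_mem {c s m n : ℤ} (h : n ≡ c * s [ZMOD c * m]) : c ∣ n := by
  rw [Int.modEq_iff_dvd] at h
  have h1 : c ∣ c * s - n := dvd_trans (dvd_mul_right c m) h
  have h2 : c ∣ c * s := dvd_mul_right c s
  have := dvd_sub h2 h1
  simpa using this

private lemma not_chain_of_dvd {n : ℤ} {i : ℕ} (h : ((2:ℤ)^(i+1)) ∣ n) :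
    ¬ n ≡ 2^i [ZMOD ((2:ℤ)^(i+1))] := by
  rw [Int.modEq_iff_dvd]
  intro hd
  have h1 : (2:ℤ)^(i+1) ∣ 2^i := by
    have := hd.add h; simpa using this
  have h2 : (2:ℤ)^(i+1) ≤ 2^i := Int.le_of_dvd (by positivity) h1
  have h3 : (2:ℤ)^i < 2^(i+1) := by
    apply pow_lt_pow_right₀ (by norm_num) (by omega)
  omega

private lemma chain_disjoint {i j : ℕ} (hij : i ≠ j) :
    ¬ ((2:ℤ)^i ≡ 2^j [ZMOD ((2:ℤ)^(j+1))]) := by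
  rcases lt_or_gt_of_ne hij with h | h
  · -- i < j
    rw [Int.modEq_iff_dvd]
    intro hd
    have key : (2:ℤ)^j - 2^i = 2^i * (2^(j-i) - 1) := by
      rw [mul_sub, mul_one, ← pow_add]
      congr 2
      omega
    rw [key] at hd
    have h1 : (2:ℤ)^i * 2 ∣ 2^i * (2^(j-i) - 1) := by
      refine dvd_trans ?_ hd
      have : (2:ℤ)^i * 2 = 2^(i+1) := by ring
      rw [this]
      exact pow_dvd_pow 2 (by omega)
    have h2 : (2:ℤ) ∣ 2^(j-i) - 1 :=
      (mul_dvd_mul_iff_left (by positivity : (2:ℤ)^i ≠ 0)).mp h1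
    have h3 : (2:ℤ) ∣ 2^(j-i) := dvd_pow_self 2 (by omega)
    omega
  · -- j < i
    have : ((2:ℤ)^(j+1)) ∣ 2^i := pow_dvd_pow 2 (by omega)
    exact not_chain_of_dvd this

private lemma cf_mono (a b : ℕ) (hab : a < b) (hb : b ≤ 4) : cf a < cf b := by
  have ha : a ≤ 3 := by omega
  interval_cases a <;> interval_cases b <;> norm_num [cf]

private lemma geo_sum (k : ℕ) : ∑ i ∈ Finset.range k, (1:ℚ)/2^(i+1) = 1 - 1/2^k := by
  induction k with
  | zero => simp
  | succ k ih =>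
    rw [Finset.sum_range_succ, ih]
    have : (2:ℚ)^k ≠ 0 := by positivity
    field_simp
    ring

theorem exists_distinct_minimal_covering_small_R (ε : ℚ) (hε : 0 < ε) :
    ∃ (k : ℕ) (m : Fin k → ℕ) (r : Fin k → ℤ),
      (∀ i, 2 ≤ m i) ∧ Function.Injective m ∧
      (∀ n : ℤ, ∃ i, n ≡ r i [ZMOD (m i : ℤ)]) ∧
      (∀ i, ¬ (∀ n : ℤ, ∃ j, j ≠ i ∧ n ≡ r j [ZMOD (m j : ℤ)])) ∧
      ∑ i : Fin k, (1 : ℚ) / (m i) < 1 + ε := by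
  obtain ⟨k, hk⟩ := pow_unbounded_of_one_lt (1/(3*ε)) (by norm_num : (1:ℚ) < 2)
  set M : Fin (k+5) → ℕ := fun i => if (i:ℕ) < k then 2^((i:ℕ)+1) else 2^k * cf ((i:ℕ)-k)
    with hM
  set R : Fin (k+5) → ℤ := fun i => if (i:ℕ) < k then 2^((i:ℕ)) else 2^k * rf ((i:ℕ)-k)
    with hR
  have cf_pos : ∀ j, 2 ≤ cf j := by
    intro j
    unfold cf
    split_ifs <;> norm_num
  -- cast lemmas
  have Mcast_chain : ∀ (i : Fin (k+5)), (i:ℕ) < k → ((M i : ℤ) = 2^((i:ℕ)+1) ∧ R i = 2^((i:ℕ))) := by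
    intro i hi
    simp [hM, hR, hi]
  have Mcast_tail : ∀ (i : Fin (k+5)), ¬ ((i:ℕ) < k) →
      ((M i : ℤ) = 2^k * (cf ((i:ℕ)-k) : ℤ) ∧ R i = 2^k * rf ((i:ℕ)-k)) := by
    intro i hi
    simp [hM, hR, hi]
  refine ⟨k+5, M, R, ?_, ?_, ?_, ?_, ?_⟩
  · -- 2 ≤ M i
    intro i
    by_cases hi : (i:ℕ) < k
    · simp only [hM, hi, if_pos]
      calc 2 = 2^1 := rfl
        _ ≤ 2^((i:ℕ)+1) := Nat.pow_le_pow_right (by norm_num) (by omega)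
    · simp only [hM, hi, if_neg, not_false_iff]
      calc 2 = 1 * 2 := by ring
        _ ≤ 2^k * cf ((i:ℕ)-k) :=
          Nat.mul_le_mul (Nat.one_le_two_pow) (cf_pos _)
  · -- Injective
    have mono : ∀ i j : Fin (k+5), (i:ℕ) < (j:ℕ) → M i < M j := by
      intro i j hij
      by_cases hi : (i:ℕ) < k <;> by_cases hj : (j:ℕ) < k
      · simp only [hM, hi, hj, if_pos]
        exact Nat.pow_lt_pow_right (by norm_num) (by omega)
      · simp only [hM, hi, hj, if_pos, if_neg, not_false_iff]
        calc 2^((i:ℕ)+1) ≤ 2^k := Nat.pow_le_pow_right (by norm_num) (by omega)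
          _ < 2^k * 2 := by
              have : 0 < 2^k := Nat.pow_pos (by norm_num)
              omega
          _ ≤ 2^k * cf ((j:ℕ)-k) := Nat.mul_le_mul_left _ (cf_pos _)
      · omega
      · simp only [hM, hi, hj, if_neg, not_false_iff]
        have hi4 : (i:ℕ) - k ≤ 4 := by omega
        have hj4 : (j:ℕ) - k ≤ 4 := by omega
        have hlt : (i:ℕ) - k < (j:ℕ) - k := by omega
        have hcf : cf ((i:ℕ)-k) < cf ((j:ℕ)-k) := cf_mono _ _ hlt hj4
        exact mul_lt_mul_of_pos_left hcf (Nat.pow_pos (by norm_num))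
    intro i j hij
    by_contra hne
    rcases lt_or_gt_of_ne (fun h : (i:ℕ) = (j:ℕ) => hne (Fin.ext h)) with h | h
    · exact absurd hij (mono i j h).ne
    · exact absurd hij.symm (mono j i h).ne
  · -- covering
    intro n
    rcases chain_or_dvd k n with ⟨i, hik, h⟩ | ⟨t, ht⟩
    · refine ⟨⟨i, by omega⟩, ?_⟩
      obtain ⟨hm, hr⟩ := Mcast_chain ⟨i, by omega⟩ (by simpa using hik)
      rw [hm, hr]
      simpa using h
    · obtain ⟨j, hj4, hj⟩ := tail_cover t
      refine ⟨⟨k + j, by omega⟩, ?_⟩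
      obtain ⟨hm, hr⟩ := Mcast_tail ⟨k + j, by omega⟩ (by simp)
      rw [hm, hr]
      simp only [Fin.val_mk, Nat.add_sub_cancel_left]
      rw [ht]
      exact hj.mul_left' (c := (2:ℤ)^k)
  · -- minimality
    intro i hcov
    by_cases hi : (i:ℕ) < k
    · -- witness 2^i
      obtain ⟨j, hji, hj⟩ := hcov ((2:ℤ)^((i:ℕ)))
      by_cases hjk : (j:ℕ) < k
      · obtain ⟨hm, hr⟩ := Mcast_chain j hjk
        rw [hm, hr] at hj
        have hne : (i:ℕ) ≠ (j:ℕ) := fun h => hji (Fin.ext h.symm)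
        exact chain_disjoint hne hj
      · obtain ⟨hm, hr⟩ := Mcast_tail j hjk
        rw [hm, hr] at hj
        have h1 : (2:ℤ)^k ∣ 2^((i:ℕ)) := dvd_of_tail_mem hj
        have h2 : (2:ℤ)^k ≤ 2^((i:ℕ)) := Int.le_of_dvd (by positivity) h1
        have h3 : (2:ℤ)^((i:ℕ)) < 2^k := pow_lt_pow_right₀ (by norm_num) hi
        omega
    · -- witness 2^k * wf (i - k)
      obtain ⟨j, hji, hj⟩ := hcov ((2:ℤ)^k * wf ((i:ℕ)-k))
      by_cases hjk : (j:ℕ) < k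
      · obtain ⟨hm, hr⟩ := Mcast_chain j hjk
        rw [hm, hr] at hj
        have hd : ((2:ℤ)^((j:ℕ)+1)) ∣ (2:ℤ)^k * wf ((i:ℕ)-k) :=
          Dvd.dvd.mul_right (pow_dvd_pow 2 (by omega)) _
        exact not_chain_of_dvd hd hj
      · obtain ⟨hm, hr⟩ := Mcast_tail j hjk
        rw [hm, hr] at hj
        have hc : wf ((i:ℕ)-k) ≡ rf ((j:ℕ)-k) [ZMOD ((cf ((j:ℕ)-k) : ℤ))] :=
          cancel_modEq (by positivity) hj
        have hne : (i:ℕ) - k ≠ (j:ℕ) - k := by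
          intro h
          apply hji
          apply Fin.ext
          omega
        exact tail_not ((i:ℕ)-k) ((j:ℕ)-k) (by omega) (by omega) hne hc
  · -- sum
    set g : ℕ → ℚ := fun n => if n < k then (1:ℚ)/2^(n+1) else 1/(2^k * cf (n-k)) with hg
    have hf : ∀ i : Fin (k+5), (1:ℚ) / (M i) = g (i:ℕ) := by
      intro i
      by_cases hi : (i:ℕ) < k
      · have hMi : M i = 2^((i:ℕ)+1) := by simp [hM, hi]
        rw [hMi, hg]
        simp only [hi, if_pos]
        push_cast
        ring
      · have hMi : M i = 2^k * cf ((i:ℕ)-k) := by simp [hM, hi]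
        rw [hMi, hg]
        simp only [hi, if_neg, not_false_iff]
        push_cast
        ring
    have gtail : ∀ j, g (k + j) = 1/(2^k * cf j) := by
      intro j
      have hkj : ¬ (k + j < k) := by omega
      simp [hg, hkj]
    have hsum : ∑ i : Fin (k+5), (1:ℚ) / (M i) = 1 + 1/(3 * 2^k) := by
      rw [Finset.sum_congr rfl (fun i _ => hf i), Fin.sum_univ_eq_sum_range g (k+5)]
      rw [show k + 5 = (k+4)+1 by ring, Finset.sum_range_succ]
      rw [show k + 4 = (k+3)+1 by ring, Finset.sum_range_succ]
      rw [show k + 3 = (k+2)+1 by ring, Finset.sum_range_succ]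
      rw [show k + 2 = (k+1)+1 by ring, Finset.sum_range_succ]
      rw [Finset.sum_range_succ]
      have hc : ∀ n ∈ Finset.range k, g n = (1:ℚ)/2^(n+1) := by
        intro n hn
        rw [hg]
        simp only [Finset.mem_range.mp hn, if_pos]
      rw [Finset.sum_congr rfl hc, geo_sum]
      have e0 : g k = 1/((2:ℚ)^k * 2) := by simpa [cf] using gtail 0
      have e1 : g (k+1) = 1/((2:ℚ)^k * 3) := by simpa [cf] using gtail 1
      have e2 : g (k+2) = 1/((2:ℚ)^k * 4) := by simpa [cf] using gtail 2
      have e3 : g (k+3) = 1/((2:ℚ)^k * 6) := by simpa [cf] using gtail 3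
      have e4 : g (k+4) = 1/((2:ℚ)^k * 12) := by simpa [cf] using gtail 4
      rw [e0, e1, e2, e3, e4]
      have h2 : (2:ℚ)^k ≠ 0 := by positivity
      field_simp
      ring
    rw [hsum]
    have hkpos : (0:ℚ) < 2^k := by positivity
    have hlt : 1/(3 * (2:ℚ)^k) < ε := by
      rw [div_lt_iff₀ (by positivity)]
      rw [div_lt_iff₀ (by positivity)] at hk
      nlinarith
    linarith
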